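/- arXiv:2407.11411 — 2 statements merged into one kernel-verified Lean document; each statement's English description precedes it below -/
import Mathlib

section
/- Let p and q be odd primes and consider the permutations of ℤ_p × ℤ_{2q} given by μ(i,j) = (i+1,j), σν(i,j) = (-i,j+1), and τ(i,j) = (-i,-j), and let H = ⟨μ, σν, τ⟩, a subgroup of the symmetric group on ℤ_p × ℤ_{2q}. Then the minimal normal subgroups of H are exactly ⟨μ⟩ and ⟨ν²⟩, where ν² is the permutation (i,j) ↦ (i,j+2). -/
open SimpleGraph

namespace OG4

variable {V : Type*} {W : Type*}

/-! ### Normal quotients, cycles, and basic pairs -/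

/-- The setoid of orbits of a group `N` of permutations of `V`. -/
def orbitSetoid (N : Subgroup (Equiv.Perm V)) : Setoid V := MulAction.orbitRel N V

/-- The (normal) quotient graph of a graph `Γ` with respect to a group `N` of permutations:
its vertices are the `N`-orbits, two distinct orbits being adjacent iff some vertex of one is
adjacent in `Γ` to some vertex of the other. -/
def quotientGraph (Γ : SimpleGraph V) (N : Subgroup (Equiv.Perm V)) :
    SimpleGraph (Quotient (orbitSetoid N)) :=
  SimpleGraph.fromRel fun a b =>
    ∃ x y : V, Quotient.mk (orbitSetoid N) x = a ∧ Quotient.mk (orbitSetoid N) y = b ∧ Γ.Adj x y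

/-- `N` is a normal subgroup of the subgroup `G` (of some ambient group). -/
def NormalIn {G : Type*} [Group G] (N H : Subgroup G) : Prop :=
  N ≤ H ∧ ∀ h ∈ H, ∀ n ∈ N, h * n * h⁻¹ ∈ N

/-- A graph is isomorphic to a cycle graph `C_m` for some `m ≥ 3`. -/
def IsoCycle (Δ : SimpleGraph W) : Prop :=
  ∃ m : ℕ, 3 ≤ m ∧ Nonempty (Δ ≃g SimpleGraph.cycleGraph m)

/-- Every normal quotient of `(Γ, G)` relative to a nontrivial normal subgroup is degenerate:
it has at most 2 vertices or is a cycle. -/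
def IsBasic (Γ : SimpleGraph V) (G : Subgroup (Equiv.Perm V)) : Prop :=
  ∀ N : Subgroup (Equiv.Perm V), NormalIn N G → N ≠ ⊥ →
    Nat.card (Quotient (orbitSetoid N)) ≤ 2 ∨ IsoCycle (quotientGraph Γ N)

/-- `(Γ, G)` is basic of cycle type. -/
def BasicOfCycleType (Γ : SimpleGraph V) (G : Subgroup (Equiv.Perm V)) : Prop :=
  IsBasic Γ G ∧
    ∃ N : Subgroup (Equiv.Perm V), NormalIn N G ∧ N ≠ ⊥ ∧ IsoCycle (quotientGraph Γ N)

/-- The kernel of the action of `G` on the set of `N`-orbits. -/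
def orbitKernel (G N : Subgroup (Equiv.Perm V)) : Subgroup (Equiv.Perm V) where
  carrier := {g | g ∈ G ∧ ∀ x : V,
    Quotient.mk (orbitSetoid N) (g x) = Quotient.mk (orbitSetoid N) x}
  one_mem' := ⟨G.one_mem, fun x => by simp⟩
  mul_mem' := by
    rintro a b ⟨haG, ha⟩ ⟨hbG, hb⟩
    refine ⟨G.mul_mem haG hbG, fun x => ?_⟩
    rw [Equiv.Perm.mul_apply, ha (b x), hb x]
  inv_mem' := by
    rintro a ⟨haG, ha⟩
    refine ⟨G.inv_mem haG, fun x => ?_⟩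
    have h := ha (a⁻¹ x)
    rw [show a (a⁻¹ x) = x from a.apply_symm_apply x] at h
    exact h.symm

/-- `(Γ, G)` has a pair of independent cyclic normal quotients. -/
def HasIndepCyclicQuotients (Γ : SimpleGraph V) (G : Subgroup (Equiv.Perm V)) : Prop :=
  ∃ N M : Subgroup (Equiv.Perm V), NormalIn N G ∧ NormalIn M G ∧
    IsoCycle (quotientGraph Γ N) ∧ IsoCycle (quotientGraph Γ M) ∧
    ¬ IsoCycle (quotientGraph Γ (orbitKernel G N ⊓ orbitKernel G M))

/-- `(Γ, G)` is basic of independent-cycle type. -/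
def BasicOfIndependentCycleType (Γ : SimpleGraph V) (G : Subgroup (Equiv.Perm V)) : Prop :=
  IsBasic Γ G ∧ HasIndepCyclicQuotients Γ G

/-- Isomorphism of graph-group pairs: a graph isomorphism conjugating one group onto the other. -/
def PairIso (Γ : SimpleGraph V) (G : Subgroup (Equiv.Perm V))
    (Δ : SimpleGraph W) (H : Subgroup (Equiv.Perm W)) : Prop :=
  ∃ e : Γ ≃g Δ, ∀ h : Equiv.Perm W, h ∈ H ↔ ∃ g ∈ G, e.toEquiv.permCongr g = h

/-! ### Minimal normal subgroups -/

/-- `M` is a minimal normal subgroup of the ambient group. -/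
def IsMinimalNormal {G : Type*} [Group G] (M : Subgroup G) : Prop :=
  M.Normal ∧ M ≠ ⊥ ∧ ∀ N : Subgroup G, N.Normal → N ≤ M → N = ⊥ ∨ N = M

/-- `M` is a minimal normal subgroup of the subgroup `H`. -/
def IsMinimalNormalIn {G : Type*} [Group G] (M H : Subgroup G) : Prop :=
  NormalIn M H ∧ M ≠ ⊥ ∧ ∀ N : Subgroup G, NormalIn N H → N ≤ M → N = ⊥ ∨ N = M

/-! ### The graphs `Γ(r,s)` and their automorphisms -/

/-- In `Γ(r,s)`, the vertex `(i,j)` is joined to the four vertices `(i ± 1, j ± 1)`. -/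
def gammaRel (r s : ℕ) (x y : ZMod r × ZMod s) : Prop :=
  (y.1 = x.1 + 1 ∨ y.1 = x.1 - 1) ∧ (y.2 = x.2 + 1 ∨ y.2 = x.2 - 1)

/-- The graph `Γ(r,s)` on `ℤ_r × ℤ_s`. -/
def Gamma (r s : ℕ) : SimpleGraph (ZMod r × ZMod s) := SimpleGraph.fromRel (gammaRel r s)

/-- `μ : (i,j) ↦ (i+1, j)`. -/
def mu (r s : ℕ) : Equiv.Perm (ZMod r × ZMod s) :=
  (Equiv.addRight (1 : ZMod r)).prodCongr (Equiv.refl (ZMod s))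

/-- `ν : (i,j) ↦ (i, j+1)`. -/
def nu (r s : ℕ) : Equiv.Perm (ZMod r × ZMod s) :=
  (Equiv.refl (ZMod r)).prodCongr (Equiv.addRight (1 : ZMod s))

/-- `σ : (i,j) ↦ (-i, j)`. -/
def sigma (r s : ℕ) : Equiv.Perm (ZMod r × ZMod s) :=
  (Equiv.neg (ZMod r)).prodCongr (Equiv.refl (ZMod s))

/-- `τ : (i,j) ↦ (-i, -j)`. -/
def tau (r s : ℕ) : Equiv.Perm (ZMod r × ZMod s) :=
  (Equiv.neg (ZMod r)).prodCongr (Equiv.neg (ZMod s))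

/-- `σν : (i,j) ↦ (-i, j+1)`. -/
def sigmaNu (r s : ℕ) : Equiv.Perm (ZMod r × ZMod s) :=
  (Equiv.neg (ZMod r)).prodCongr (Equiv.addRight (1 : ZMod s))

/-- `μν : (i,j) ↦ (i+1, j+1)`. -/
def muNu (r s : ℕ) : Equiv.Perm (ZMod r × ZMod s) :=
  (Equiv.addRight (1 : ZMod r)).prodCongr (Equiv.addRight (1 : ZMod s))

/-- `σμν : (i,j) ↦ (-(i+1), j+1)`. -/
def sigmaMuNu (r s : ℕ) : Equiv.Perm (ZMod r × ZMod s) :=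
  ((Equiv.addRight (1 : ZMod r)).trans (Equiv.neg (ZMod r))).prodCongr
    (Equiv.addRight (1 : ZMod s))

/-- `μ² : (i,j) ↦ (i+2, j)`. -/
def muSq (r s : ℕ) : Equiv.Perm (ZMod r × ZMod s) :=
  (Equiv.addRight (2 : ZMod r)).prodCongr (Equiv.refl (ZMod s))

/-- `ν² : (i,j) ↦ (i, j+2)`. -/
def nuSq (r s : ℕ) : Equiv.Perm (ZMod r × ZMod s) :=
  (Equiv.refl (ZMod r)).prodCongr (Equiv.addRight (2 : ZMod s))

/-- `μ^k : (i,j) ↦ (i+k, j)`. -/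
def muPow (r s k : ℕ) : Equiv.Perm (ZMod r × ZMod s) :=
  (Equiv.addRight ((k : ZMod r))).prodCongr (Equiv.refl (ZMod s))

/-- `μ^k ν² : (i,j) ↦ (i+k, j+2)`. -/
def muPowNuSq (r s k : ℕ) : Equiv.Perm (ZMod r × ZMod s) :=
  (Equiv.addRight ((k : ZMod r))).prodCongr (Equiv.addRight (2 : ZMod s))

/-- `G(r,s) = ⟨μ, ν, σ⟩`. -/
def Ggroup (r s : ℕ) : Subgroup (Equiv.Perm (ZMod r × ZMod s)) :=
  Subgroup.closure {mu r s, nu r s, sigma r s}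

/-- `H(r,s) = ⟨μ, σν, τ⟩`. -/
def Hgroup (r s : ℕ) : Subgroup (Equiv.Perm (ZMod r × ZMod s)) :=
  Subgroup.closure {mu r s, sigmaNu r s, tau r s}

/-! ### The graphs `Γ⁺(r,s)` (for `r`, `s` even) -/

/-- `X⁺`: the set of `(i,j)` with `i` and `j` of the same parity. -/
def XPlus (r s : ℕ) : Set (ZMod r × ZMod s) := {x | x.1.val % 2 = x.2.val % 2}

/-- `Γ⁺(r,s)`, the subgraph of `Γ(r,s)` induced on `X⁺`. -/
def GammaPlus (r s : ℕ) : SimpleGraph (XPlus r s) :=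
  SimpleGraph.induce (XPlus r s) (Gamma r s)

section parity

lemma val_add_one_mod_two (r : ℕ) (hr : 2 ∣ r) (hr0 : r ≠ 0) (i : ZMod r) :
    (i + 1).val % 2 = (i.val + 1) % 2 := by
  haveI : NeZero r := ⟨hr0⟩
  haveI : Fact (1 < r) := ⟨by have := Nat.le_of_dvd (Nat.pos_of_ne_zero hr0) hr; omega⟩
  rw [ZMod.val_add, Nat.mod_mod_of_dvd _ hr, ZMod.val_one]

lemma val_add_two_mod_two (r : ℕ) (hr : 2 ∣ r) (hr0 : r ≠ 0) (i : ZMod r) :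
    (i + 2).val % 2 = i.val % 2 := by
  have h1 := val_add_one_mod_two r hr hr0 i
  have h2 := val_add_one_mod_two r hr hr0 (i + 1)
  rw [show i + 1 + 1 = i + 2 by ring] at h2
  omega

lemma val_neg_mod_two (r : ℕ) (hr : 2 ∣ r) (hr0 : r ≠ 0) (i : ZMod r) :
    (-i).val % 2 = i.val % 2 := by
  haveI : NeZero r := ⟨hr0⟩
  rcases eq_or_ne i 0 with h | h
  · simp [h]
  · have h1 : (-i).val = r - i.val := by rw [ZMod.neg_val]; simp [h]
    have h2 : i.val < r := ZMod.val_lt i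
    have h3 : i.val ≠ 0 := fun hh => h ((ZMod.val_eq_zero i).mp hh)
    obtain ⟨t, rfl⟩ := hr
    rw [h1]
    omega

end parity

section plusPerms

variable (r s : ℕ)

/-- The restriction of `μ²` to `X⁺`. -/
def muSqP (hr : 2 ∣ r) (hr0 : r ≠ 0) : Equiv.Perm (XPlus r s) :=
  (muSq r s).subtypePerm (by
    intro x
    have h := val_add_two_mod_two r hr hr0 x.1
    simp only [XPlus, Set.mem_setOf_eq, muSq, Equiv.prodCongr_apply, Prod.map,
      Equiv.coe_addRight, Equiv.refl_apply]
    omega)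

/-- The restriction of `ν²` to `X⁺`. -/
def nuSqP (hs : 2 ∣ s) (hs0 : s ≠ 0) : Equiv.Perm (XPlus r s) :=
  (nuSq r s).subtypePerm (by
    intro x
    have h := val_add_two_mod_two s hs hs0 x.2
    simp only [XPlus, Set.mem_setOf_eq, nuSq, Equiv.prodCongr_apply, Prod.map,
      Equiv.coe_addRight, Equiv.refl_apply]
    omega)

/-- The restriction of `μν` to `X⁺`. -/
def muNuP (hr : 2 ∣ r) (hr0 : r ≠ 0) (hs : 2 ∣ s) (hs0 : s ≠ 0) : Equiv.Perm (XPlus r s) :=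
  (muNu r s).subtypePerm (by
    intro x
    have h1 := val_add_one_mod_two r hr hr0 x.1
    have h2 := val_add_one_mod_two s hs hs0 x.2
    simp only [XPlus, Set.mem_setOf_eq, muNu, Equiv.prodCongr_apply, Prod.map,
      Equiv.coe_addRight]
    omega)

/-- The restriction of `σ` to `X⁺`. -/
def sigmaP (hr : 2 ∣ r) (hr0 : r ≠ 0) : Equiv.Perm (XPlus r s) :=
  (sigma r s).subtypePerm (by
    intro x
    have h := val_neg_mod_two r hr hr0 x.1
    simp only [XPlus, Set.mem_setOf_eq, sigma, Equiv.prodCongr_apply, Prod.map,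
      Equiv.neg_apply, Equiv.refl_apply]
    omega)

/-- The restriction of `τ` to `X⁺`. -/
def tauP (hr : 2 ∣ r) (hr0 : r ≠ 0) (hs : 2 ∣ s) (hs0 : s ≠ 0) : Equiv.Perm (XPlus r s) :=
  (tau r s).subtypePerm (by
    intro x
    have h1 := val_neg_mod_two r hr hr0 x.1
    have h2 := val_neg_mod_two s hs hs0 x.2
    simp only [XPlus, Set.mem_setOf_eq, tau, Equiv.prodCongr_apply, Prod.map,
      Equiv.neg_apply]
    omega)

/-- The restriction of `σμν` to `X⁺`. -/
def sigmaMuNuP (hr : 2 ∣ r) (hr0 : r ≠ 0) (hs : 2 ∣ s) (hs0 : s ≠ 0) :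
    Equiv.Perm (XPlus r s) :=
  (sigmaMuNu r s).subtypePerm (by
    intro x
    have h1 := val_neg_mod_two r hr hr0 (x.1 + 1)
    have h2 := val_add_one_mod_two r hr hr0 x.1
    have h3 := val_add_one_mod_two s hs hs0 x.2
    simp only [XPlus, Set.mem_setOf_eq, sigmaMuNu, Equiv.prodCongr_apply, Prod.map,
      Equiv.trans_apply, Equiv.coe_addRight, Equiv.neg_apply]
    omega)

/-- `G⁺(r,s) = ⟨μ², μν, σ⟩` acting on `X⁺`. -/
def GPlusGroup (hr : 2 ∣ r) (hr0 : r ≠ 0) (hs : 2 ∣ s) (hs0 : s ≠ 0) :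
    Subgroup (Equiv.Perm (XPlus r s)) :=
  Subgroup.closure {muSqP r s hr hr0, muNuP r s hr hr0 hs hs0, sigmaP r s hr hr0}

/-- `H⁺(r,s) = ⟨μ², σμν, τ⟩` acting on `X⁺`. -/
def HPlusGroup (hr : 2 ∣ r) (hr0 : r ≠ 0) (hs : 2 ∣ s) (hs0 : s ≠ 0) :
    Subgroup (Equiv.Perm (XPlus r s)) :=
  Subgroup.closure
    {muSqP r s hr hr0, sigmaMuNuP r s hr hr0 hs hs0, tauP r s hr hr0 hs hs0}

end plusPerms

/-! ### The standard double cover `Γ₂(r,s)` -/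

/-- Adjacency of the double cover: `(i,j)_δ ~ (i ± 1, j ± 1)_{δ+1}`. -/
def gamma2Rel (r s : ℕ) (x y : (ZMod r × ZMod s) × ZMod 2) : Prop :=
  (y.1.1 = x.1.1 + 1 ∨ y.1.1 = x.1.1 - 1) ∧ (y.1.2 = x.1.2 + 1 ∨ y.1.2 = x.1.2 - 1) ∧
    y.2 = x.2 + 1

/-- `Γ₂(r,s)`, the standard double cover of `Γ(r,s)`. -/
def Gamma2 (r s : ℕ) : SimpleGraph ((ZMod r × ZMod s) × ZMod 2) :=
  SimpleGraph.fromRel (gamma2Rel r s)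

/-- `μ : (i,j)_δ ↦ (i+1, j)_δ` on the double cover. -/
def muD (r s : ℕ) : Equiv.Perm ((ZMod r × ZMod s) × ZMod 2) :=
  (mu r s).prodCongr (Equiv.refl (ZMod 2))

/-- `ν : (i,j)_δ ↦ (i, j+1)_δ` on the double cover. -/
def nuD (r s : ℕ) : Equiv.Perm ((ZMod r × ZMod s) × ZMod 2) :=
  (nu r s).prodCongr (Equiv.refl (ZMod 2))

/-- `σ : (i,j)_δ ↦ (i, -j)_{δ+1}` on the double cover. -/
def sigmaD (r s : ℕ) : Equiv.Perm ((ZMod r × ZMod s) × ZMod 2) :=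
  ((Equiv.refl (ZMod r)).prodCongr (Equiv.neg (ZMod s))).prodCongr
    (Equiv.addRight (1 : ZMod 2))

/-- `τ : (i,j)_δ ↦ (-i, -j)_δ` on the double cover. -/
def tauD (r s : ℕ) : Equiv.Perm ((ZMod r × ZMod s) × ZMod 2) :=
  (tau r s).prodCongr (Equiv.refl (ZMod 2))

/-- `G₂(r,s) = ⟨μ, ν, σ, τ⟩` on the double cover. -/
def G2group (r s : ℕ) : Subgroup (Equiv.Perm ((ZMod r × ZMod s) × ZMod 2)) :=
  Subgroup.closure {muD r s, nuD r s, sigmaD r s, tauD r s}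



section Stmt15Aux
variable {n : ℕ}

/-- affine permutation of `ZMod n`: `i ↦ (cond e (-i) i) + a`. -/
def fA (e : Bool) (a : ZMod n) : Equiv.Perm (ZMod n) :=
  (cond e (Equiv.neg (ZMod n)) (Equiv.refl (ZMod n))).trans (Equiv.addRight a)

@[simp] lemma fA_apply (e : Bool) (a i : ZMod n) : fA e a i = (cond e (-i) i) + a := by
  cases e <;> rfl

lemma fA_mul (e e' : Bool) (a a' : ZMod n) :
    fA e a * fA e' a' = fA (xor e e') ((cond e (-a') a') + a) := by
  ext i
  cases e <;> cases e' <;> simp [Equiv.Perm.mul_apply] <;> ring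

lemma fA_zero : (fA false (0 : ZMod n)) = 1 := by
  ext i; simp

lemma fA_inv (e : Bool) (a : ZMod n) : (fA e a)⁻¹ = fA e (cond e a (-a)) := by
  apply inv_eq_of_mul_eq_one_right
  rw [fA_mul]
  cases e <;> simp [fA_zero]

lemma P_mul {α β : Type*} (a b : Equiv.Perm α) (c d : Equiv.Perm β) :
    a.prodCongr c * b.prodCongr d = (a * b).prodCongr (c * d) := by
  ext ⟨x, y⟩ <;> simp [Equiv.Perm.mul_apply]

lemma P_one {α β : Type*} :
    (1 : Equiv.Perm α).prodCongr (1 : Equiv.Perm β) = 1 := by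
  ext ⟨x, y⟩ <;> simp

lemma P_inv {α β : Type*} (a : Equiv.Perm α) (c : Equiv.Perm β) :
    (a.prodCongr c)⁻¹ = a⁻¹.prodCongr c⁻¹ := by
  apply inv_eq_of_mul_eq_one_right
  rw [P_mul]
  simp [P_one]

lemma P_fA_congr {m : ℕ} {e f : Bool} {a a' : ZMod n} {b b' : ZMod m}
    (h1 : a = a') (h2 : b = b') :
    (fA e a).prodCongr (fA f b) = (fA e a').prodCongr (fA f b') := by rw [h1, h2]

lemma fA_false_pow (a : ZMod n) (k : ℕ) : (fA false a) ^ k = fA false ((k : ZMod n) * a) := by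
  induction k with
  | zero => simpa using fA_zero.symm
  | succ k ih =>
    rw [pow_succ, ih, fA_mul]
    refine congrArg _ ?_
    push_cast
    simp
    ring

lemma P_pow {α β : Type*} (a : Equiv.Perm α) (c : Equiv.Perm β) (k : ℕ) :
    (a.prodCongr c) ^ k = (a ^ k).prodCongr (c ^ k) := by
  induction k with
  | zero => simpa using P_one.symm
  | succ k ih => rw [pow_succ, ih, P_mul, ← pow_succ, ← pow_succ]

end Stmt15Aux

-- PHASE2 START
section Stmt15Main

variable (p q : ℕ)

lemma mu_eq : mu p (2*q) = (fA false 1).prodCongr (fA false 0) := by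
  ext ⟨i, j⟩ <;> simp [mu, fA]

lemma sigmaNu_eq : sigmaNu p (2*q) = (fA true 0).prodCongr (fA false 1) := by
  ext ⟨i, j⟩ <;> simp [sigmaNu, fA]

lemma tau_eq : tau p (2*q) = (fA true 0).prodCongr (fA true 0) := by
  ext ⟨i, j⟩ <;> simp [tau, fA]

lemma nuSq_eq : nuSq p (2*q) = (fA false 0).prodCongr (fA false 2) := by
  ext ⟨i, j⟩ <;> simp [nuSq, fA]

/-- parity indicator -/
def chi : Bool → ZMod 2 := fun e => cond e 1 0

lemma chi_xor (u v : Bool) : chi (xor u v) = chi u + chi v := by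
  cases u <;> cases v <;> decide

/-- The group of "affine" permutations with the parity constraint. -/
def KG : Subgroup (Equiv.Perm (ZMod p × ZMod (2*q))) where
  carrier := { g | ∃ (e f : Bool) (a : ZMod p) (b : ZMod (2*q)),
      g = (fA e a).prodCongr (fA f b) ∧
        chi e = chi f + ZMod.castHom (⟨q, rfl⟩ : (2:ℕ) ∣ 2*q) (ZMod 2) b }
  one_mem' := ⟨false, false, 0, 0, by rw [fA_zero, fA_zero, P_one], by simp [chi]⟩
  mul_mem' := by
    rintro g g' ⟨e, f, a, b, rfl, hc⟩ ⟨e', f', a', b', rfl, hc'⟩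
    refine ⟨xor e e', xor f f', _, _, by rw [P_mul, fA_mul, fA_mul], ?_⟩
    rw [chi_xor, chi_xor, map_add]
    cases f <;>
      simp only [Bool.cond_true, Bool.cond_false, map_neg, CharTwo.neg_eq] <;>
      linear_combination hc + hc'
  inv_mem' := by
    rintro g ⟨e, f, a, b, rfl, hc⟩
    refine ⟨e, f, _, _, by rw [P_inv, fA_inv, fA_inv], ?_⟩
    cases f <;>
      simp only [Bool.cond_true, Bool.cond_false, map_neg, CharTwo.neg_eq] <;>
      linear_combination hc

lemma H_le_KG : Hgroup p (2*q) ≤ KG p q := by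
  rw [Hgroup, Subgroup.closure_le]
  rintro g hg
  simp only [Set.mem_insert_iff, Set.mem_singleton_iff] at hg
  rcases hg with rfl | rfl | rfl
  · exact ⟨false, false, 1, 0, mu_eq p q, by simp [chi]⟩
  · exact ⟨true, false, 0, 1, sigmaNu_eq p q, by simp [chi, map_one]⟩
  · exact ⟨true, true, 0, 0, tau_eq p q, by simp [chi]⟩

lemma mu_mem_H : mu p (2*q) ∈ Hgroup p (2*q) :=
  Subgroup.subset_closure (by simp)

lemma sigmaNu_mem_H : sigmaNu p (2*q) ∈ Hgroup p (2*q) :=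
  Subgroup.subset_closure (by simp)

lemma tau_mem_H : tau p (2*q) ∈ Hgroup p (2*q) :=
  Subgroup.subset_closure (by simp)

lemma mu_pow (k : ℕ) :
    mu p (2*q) ^ k = (fA false ((k : ZMod p))).prodCongr (fA false 0) := by
  rw [mu_eq, P_pow, fA_false_pow, fA_false_pow]
  exact P_fA_congr (by ring) (by ring)

lemma nuSq_pow (k : ℕ) :
    nuSq p (2*q) ^ k = (fA false (0 : ZMod p)).prodCongr (fA false ((k : ZMod (2*q)) * 2)) := by
  rw [nuSq_eq, P_pow, fA_false_pow, fA_false_pow]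
  exact P_fA_congr (by ring) rfl

lemma mu_ne_one (hp : 1 < p) : mu p (2*q) ≠ 1 := by
  haveI : NeZero p := ⟨by omega⟩
  haveI : Fact (1 < p) := ⟨hp⟩
  intro h
  have h2 := congrArg (fun σ : Equiv.Perm (ZMod p × ZMod (2*q)) => (σ (0, 0)).1) h
  simp [mu] at h2

lemma orderOf_mu (hp : p.Prime) : orderOf (mu p (2*q)) = p := by
  haveI : Fact p.Prime := ⟨hp⟩
  refine orderOf_eq_prime ?_ (mu_ne_one p q hp.one_lt)
  rw [mu_pow]
  simp [ZMod.natCast_self, fA_zero, P_one]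

lemma nuSq_ne_one (hq : q.Prime) : nuSq p (2*q) ≠ 1 := by
  haveI : NeZero (2*q) := ⟨by have := hq.two_le; omega⟩
  intro h
  have h2 := congrArg (fun σ : Equiv.Perm (ZMod p × ZMod (2*q)) => (σ (0, 0)).2) h
  simp [nuSq] at h2
  have h3 : ((2:ℕ) : ZMod (2*q)) = 0 := by exact_mod_cast h2
  rw [ZMod.natCast_eq_zero_iff] at h3
  have := Nat.le_of_dvd (by norm_num) h3
  have := hq.two_le
  omega

lemma orderOf_nuSq (hq : q.Prime) : orderOf (nuSq p (2*q)) = q := by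
  haveI : Fact q.Prime := ⟨hq⟩
  refine orderOf_eq_prime ?_ (nuSq_ne_one p q hq)
  rw [nuSq_pow]
  have h0 : ((q : ZMod (2*q)) * 2) = 0 := by
    have h1 : ((q * 2 : ℕ) : ZMod (2*q)) = 0 := by
      rw [ZMod.natCast_eq_zero_iff]
      exact ⟨1, by ring⟩
    push_cast at h1
    exact h1
  rw [h0, fA_zero, fA_zero, P_one]

end Stmt15Main
-- PHASE2 END

-- PHASE3 START
section Stmt15Main2

variable (p q : ℕ)

lemma mu_mem_of_mem {p q : ℕ} (hp : p.Prime) {N : Subgroup (Equiv.Perm (ZMod p × ZMod (2*q)))}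
    {c : ZMod p} (hc : c ≠ 0)
    (h : (fA false c).prodCongr (fA false 0) ∈ N) : mu p (2*q) ∈ N := by
  haveI : Fact p.Prime := ⟨hp⟩
  haveI : NeZero p := ⟨hp.pos.ne'⟩
  have hg : (fA false c).prodCongr (fA false 0) = mu p (2*q) ^ c.val := by
    rw [mu_pow]
    exact P_fA_congr (ZMod.natCast_zmod_val c).symm rfl
  set k := (c⁻¹ : ZMod p).val with hk
  have hmod : c.val * k ≡ 1 [MOD p] := by
    rw [← ZMod.natCast_eq_natCast_iff]
    push_cast
    rw [ZMod.natCast_zmod_val, hk, ZMod.natCast_zmod_val]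
    exact mul_inv_cancel₀ hc
  have hpow : mu p (2*q) ^ (c.val * k) = mu p (2*q) ^ 1 := by
    rw [pow_eq_pow_iff_modEq, orderOf_mu p q hp]
    exact hmod
  have hmu : mu p (2*q) = ((fA false c).prodCongr (fA false 0)) ^ k := by
    rw [hg, ← pow_mul, hpow, pow_one]
  rw [hmu]
  exact pow_mem h k

lemma nuSq_mem_of_mem {p q : ℕ} (hq : q.Prime) {N : Subgroup (Equiv.Perm (ZMod p × ZMod (2*q)))}
    {b : ZMod (2*q)} (hb : b ≠ 0) (h2 : 2 ∣ b.val)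
    (h : (fA false 0).prodCongr (fA false b) ∈ N) : nuSq p (2*q) ∈ N := by
  haveI : Fact q.Prime := ⟨hq⟩
  haveI : NeZero (2*q) := ⟨by have := hq.two_le; omega⟩
  obtain ⟨m, hm⟩ := h2
  have hval : b.val < 2*q := ZMod.val_lt b
  have hmq : m < q := by omega
  have hm0 : m ≠ 0 := by
    rintro rfl
    exact hb ((ZMod.val_eq_zero b).mp (by omega))
  have hg : (fA false 0).prodCongr (fA false b) = nuSq p (2*q) ^ m := by
    rw [nuSq_pow]
    refine P_fA_congr rfl ?_
    have h3 : ((2 * m : ℕ) : ZMod (2*q)) = b := by rw [← hm, ZMod.natCast_zmod_val]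
    push_cast at h3
    linear_combination -h3
  have hmz : (m : ZMod q) ≠ 0 := by
    rw [Ne, ZMod.natCast_eq_zero_iff]
    intro hd
    have := Nat.le_of_dvd (Nat.pos_of_ne_zero hm0) hd
    omega
  set k := ((m : ZMod q)⁻¹).val with hk
  have hmod : m * k ≡ 1 [MOD q] := by
    rw [← ZMod.natCast_eq_natCast_iff]
    push_cast
    rw [hk, ZMod.natCast_zmod_val]
    exact mul_inv_cancel₀ hmz
  have hpow : nuSq p (2*q) ^ (m * k) = nuSq p (2*q) ^ 1 := by
    rw [pow_eq_pow_iff_modEq, orderOf_nuSq p q hq]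
    exact hmod
  have hnu : nuSq p (2*q) = ((fA false 0).prodCongr (fA false b)) ^ k := by
    rw [hg, ← pow_mul, hpow, pow_one]
  rw [hnu]
  exact pow_mem h k

lemma conj_eq_inv_of {G : Type*} [Group G] {x g : G} (A : x * g * x = g) :
    g * x * g⁻¹ = x⁻¹ := by
  have h1 : g * x = x⁻¹ * g := by
    calc g * x = x⁻¹ * (x * g * x) := by group
      _ = x⁻¹ * g := by rw [A]
  calc g * x * g⁻¹ = (g * x) * g⁻¹ := by group
    _ = x⁻¹ * g * g⁻¹ := by rw [h1]
    _ = x⁻¹ := by group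

lemma mem_normalizer_of_conj {G : Type*} [Group G] {x g : G}
    (h : g * x * g⁻¹ = x ∨ g * x * g⁻¹ = x⁻¹) :
    g ∈ Subgroup.normalizer (Subgroup.zpowers x) := by
  have h' : g⁻¹ * x * g = x ∨ g⁻¹ * x * g = x⁻¹ := by
    rcases h with h | h
    · left
      calc g⁻¹ * x * g = g⁻¹ * (g * x * g⁻¹) * g := by rw [h]
        _ = x := by group
    · right
      have h2 : g⁻¹ * x⁻¹ * g = x := by
        calc g⁻¹ * x⁻¹ * g = g⁻¹ * (g * x * g⁻¹) * g := by rw [h]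
          _ = x := by group
      have h3 := congrArg (·⁻¹) h2
      calc g⁻¹ * x * g = (g⁻¹ * x⁻¹ * g)⁻¹ := by simp [mul_inv_rev, mul_assoc]
        _ = x⁻¹ := h3
  rw [Subgroup.mem_normalizer_iff]
  intro w
  constructor
  · intro hw
    obtain ⟨k, hk⟩ := Subgroup.mem_zpowers_iff.mp hw
    subst hk
    have hc : g * x ^ k * g⁻¹ = (g * x * g⁻¹) ^ k := conj_zpow.symm
    rcases h with h | h <;> rw [hc, h]
    · exact zpow_mem (Subgroup.mem_zpowers x) k
    · exact zpow_mem (Subgroup.inv_mem _ (Subgroup.mem_zpowers x)) k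
  · intro hw
    obtain ⟨k, hk⟩ := Subgroup.mem_zpowers_iff.mp hw
    have hw' : w = (g⁻¹ * x * g) ^ k := by
      have hcz := conj_zpow (i := k) (a := g⁻¹) (b := x)
      rw [inv_inv] at hcz
      rw [hcz, hk]
      group
    rcases h' with h' | h' <;> rw [hw', h']
    · exact zpow_mem (Subgroup.mem_zpowers x) k
    · exact zpow_mem (Subgroup.inv_mem _ (Subgroup.mem_zpowers x)) k

lemma rel_mu_sigmaNu : mu p (2*q) * sigmaNu p (2*q) * mu p (2*q) = sigmaNu p (2*q) := by
  ext ⟨i, j⟩ <;> simp [mu, sigmaNu, Equiv.Perm.mul_apply] <;> ring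

lemma rel_mu_tau : mu p (2*q) * tau p (2*q) * mu p (2*q) = tau p (2*q) := by
  ext ⟨i, j⟩ <;> simp [mu, tau, Equiv.Perm.mul_apply] <;> ring

lemma rel_nuSq_tau : nuSq p (2*q) * tau p (2*q) * nuSq p (2*q) = tau p (2*q) := by
  ext ⟨i, j⟩ <;> simp [nuSq, tau, Equiv.Perm.mul_apply] <;> ring

lemma comm_mu_nuSq : mu p (2*q) * nuSq p (2*q) = nuSq p (2*q) * mu p (2*q) := by
  ext ⟨i, j⟩ <;> simp [mu, nuSq, Equiv.Perm.mul_apply]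

lemma comm_sigmaNu_nuSq : sigmaNu p (2*q) * nuSq p (2*q) = nuSq p (2*q) * sigmaNu p (2*q) := by
  ext ⟨i, j⟩ <;> simp [sigmaNu, nuSq, Equiv.Perm.mul_apply] <;> ring

lemma normalIn_mu : NormalIn (Subgroup.closure {mu p (2*q)}) (Hgroup p (2*q)) := by
  rw [← Subgroup.zpowers_eq_closure]
  constructor
  · exact Subgroup.zpowers_le.mpr (mu_mem_H p q)
  · have hH : Hgroup p (2*q) ≤ Subgroup.normalizer (Subgroup.zpowers (mu p (2*q))) := by
      rw [Hgroup, Subgroup.closure_le]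
      rintro g hg
      simp only [Set.mem_insert_iff, Set.mem_singleton_iff] at hg
      rcases hg with rfl | rfl | rfl
      · exact mem_normalizer_of_conj (Or.inl (by group))
      · exact mem_normalizer_of_conj (Or.inr (conj_eq_inv_of (rel_mu_sigmaNu p q)))
      · exact mem_normalizer_of_conj (Or.inr (conj_eq_inv_of (rel_mu_tau p q)))
    intro h hh n hn
    exact (Subgroup.mem_normalizer_iff.mp (hH hh) n).mp hn

lemma normalIn_nuSq : NormalIn (Subgroup.closure {nuSq p (2*q)}) (Hgroup p (2*q)) := by
  rw [← Subgroup.zpowers_eq_closure]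
  constructor
  · refine Subgroup.zpowers_le.mpr ?_
    have h2 : nuSq p (2*q) = sigmaNu p (2*q) * sigmaNu p (2*q) := by
      ext ⟨i, j⟩ <;> simp [sigmaNu, nuSq, Equiv.Perm.mul_apply] <;> ring
    rw [h2]
    exact mul_mem (sigmaNu_mem_H p q) (sigmaNu_mem_H p q)
  · have hH : Hgroup p (2*q) ≤ Subgroup.normalizer (Subgroup.zpowers (nuSq p (2*q))) := by
      rw [Hgroup, Subgroup.closure_le]
      rintro g hg
      simp only [Set.mem_insert_iff, Set.mem_singleton_iff] at hg
      rcases hg with rfl | rfl | rfl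
      · refine mem_normalizer_of_conj (Or.inl ?_)
        rw [comm_mu_nuSq]
        group
      · refine mem_normalizer_of_conj (Or.inl ?_)
        rw [comm_sigmaNu_nuSq]
        group
      · exact mem_normalizer_of_conj (Or.inr (conj_eq_inv_of (rel_nuSq_tau p q)))
    intro h hh n hn
    exact (Subgroup.mem_normalizer_iff.mp (hH hh) n).mp hn

lemma eq_bot_or_eq_of_le_card {G : Type*} [Group G] [Finite G] (C N : Subgroup G)
    (hN : N ≤ C) (hC : (Nat.card C).Prime) : N = ⊥ ∨ N = C := by
  have hd := Subgroup.card_dvd_of_le hN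
  rcases hC.eq_one_or_self_of_dvd _ hd with h1 | h2
  · left
    exact Subgroup.card_eq_one.mp h1
  · right
    exact Subgroup.eq_of_le_of_card_ge hN (le_of_eq h2.symm)

lemma card_closure_mu (hp : p.Prime) :
    Nat.card (Subgroup.closure {mu p (2*q)}) = p := by
  rw [← Subgroup.zpowers_eq_closure, Nat.card_zpowers, orderOf_mu p q hp]

lemma card_closure_nuSq (hq : q.Prime) :
    Nat.card (Subgroup.closure {nuSq p (2*q)}) = q := by
  rw [← Subgroup.zpowers_eq_closure, Nat.card_zpowers, orderOf_nuSq p q hq]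

lemma closure_mu_ne_bot (hp : p.Prime) : Subgroup.closure {mu p (2*q)} ≠ ⊥ := by
  intro h
  have hm := Subgroup.subset_closure (Set.mem_singleton (mu p (2*q)))
  rw [h] at hm
  exact mu_ne_one p q hp.one_lt (by simpa using hm)

lemma closure_nuSq_ne_bot (hq : q.Prime) : Subgroup.closure {nuSq p (2*q)} ≠ ⊥ := by
  intro h
  have hm := Subgroup.subset_closure (Set.mem_singleton (nuSq p (2*q)))
  rw [h] at hm
  exact nuSq_ne_one p q hq (by simpa using hm)

end Stmt15Main2
-- PHASE3 END

-- PHASE4 START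
section Stmt15Main3

variable (p q : ℕ)

lemma P_fA_one : (fA false (0 : ZMod p)).prodCongr (fA false (0 : ZMod (2*q))) = 1 := by
  rw [fA_zero, fA_zero, P_one]

lemma cast_eq_zero_iff_even (hq : q ≠ 0) (b : ZMod (2*q)) :
    ZMod.castHom (⟨q, rfl⟩ : (2:ℕ) ∣ 2*q) (ZMod 2) b = 0 ↔ 2 ∣ b.val := by
  haveI : NeZero (2*q) := ⟨by omega⟩
  rw [ZMod.castHom_apply, ← ZMod.natCast_val, ZMod.natCast_eq_zero_iff]

lemma comm_with_mu (f : Bool) (a : ZMod p) (b : ZMod (2*q)) :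
    mu p (2*q) * ((fA true a).prodCongr (fA f b)) * (mu p (2*q))⁻¹ *
      ((fA true a).prodCongr (fA f b))⁻¹ =
    (fA false 2).prodCongr (fA false 0) := by
  rw [mu_eq]
  cases f <;>
    simp only [P_inv, fA_inv, P_mul, fA_mul, Bool.cond_true, Bool.cond_false,
      Bool.xor_false, Bool.false_xor, Bool.xor_true, Bool.true_xor, Bool.xor_self,
      Bool.not_true, Bool.not_false] <;>
    exact P_fA_congr (by ring) (by ring)

lemma comm_with_sigmaNu (f : Bool) (a : ZMod p) (b : ZMod (2*q)) :
    sigmaNu p (2*q) * ((fA false a).prodCongr (fA f b)) * (sigmaNu p (2*q))⁻¹ *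
      ((fA false a).prodCongr (fA f b))⁻¹ =
    (fA false (-(a + a))).prodCongr (fA false (cond f 2 0)) := by
  rw [sigmaNu_eq]
  cases f <;>
    simp only [P_inv, fA_inv, P_mul, fA_mul, Bool.cond_true, Bool.cond_false,
      Bool.xor_false, Bool.false_xor, Bool.xor_true, Bool.true_xor, Bool.xor_self,
      Bool.not_true, Bool.not_false] <;>
    exact P_fA_congr (by ring) (by ring)

lemma conj_cancel_sigmaNu (A : ZMod p) (C : ZMod (2*q)) :
    ((fA false A).prodCongr (fA false C)) *
      (sigmaNu p (2*q) * ((fA false A).prodCongr (fA false C)) * (sigmaNu p (2*q))⁻¹)⁻¹ =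
    (fA false (A + A)).prodCongr (fA false 0) := by
  rw [sigmaNu_eq]
  simp only [P_inv, fA_inv, P_mul, fA_mul, Bool.cond_true, Bool.cond_false,
    Bool.xor_false, Bool.false_xor, Bool.xor_true, Bool.true_xor, Bool.xor_self,
    Bool.not_true, Bool.not_false]
  exact P_fA_congr (by ring) (by ring)

lemma key_lemma (hp : p.Prime) (hpo : Odd p) (hq : q.Prime)
    (N : Subgroup (Equiv.Perm (ZMod p × ZMod (2*q))))
    (hN : NormalIn N (Hgroup p (2*q))) (hbot : N ≠ ⊥) :
    mu p (2*q) ∈ N ∨ nuSq p (2*q) ∈ N := by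
  haveI : Fact p.Prime := ⟨hp⟩
  obtain ⟨g, hgN, hg1⟩ := N.bot_or_exists_ne_one.resolve_left hbot
  obtain ⟨e, f, a, b, rfl, hcon⟩ := H_le_KG p q (hN.1 hgN)
  have two_ne : (2 : ZMod p) ≠ 0 := by
    intro h
    have h2 : ((2:ℕ) : ZMod p) = 0 := by exact_mod_cast h
    rw [ZMod.natCast_eq_zero_iff] at h2
    have h3 := Nat.le_of_dvd (by norm_num) h2
    have h4 := hp.two_le
    rcases hpo with ⟨t, ht⟩
    omega
  cases e with
  | true =>
    left
    have hc1 : mu p (2*q) * ((fA true a).prodCongr (fA f b)) * (mu p (2*q))⁻¹ *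
        ((fA true a).prodCongr (fA f b))⁻¹ ∈ N :=
      mul_mem (hN.2 _ (mu_mem_H p q) _ hgN) (inv_mem hgN)
    rw [comm_with_mu p q f a b] at hc1
    exact mu_mem_of_mem hp two_ne hc1
  | false =>
    have hc2 : sigmaNu p (2*q) * ((fA false a).prodCongr (fA f b)) * (sigmaNu p (2*q))⁻¹ *
        ((fA false a).prodCongr (fA f b))⁻¹ ∈ N :=
      mul_mem (hN.2 _ (sigmaNu_mem_H p q) _ hgN) (inv_mem hgN)
    rw [comm_with_sigmaNu p q f a b] at hc2
    by_cases ha : a = 0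
    · subst ha
      cases f with
      | true =>
        right
        have heq : (fA false (-((0:ZMod p) + 0))).prodCongr
            (fA false (cond true (2 : ZMod (2*q)) 0)) = nuSq p (2*q) := by
          rw [nuSq_eq]
          exact P_fA_congr (by ring) rfl
        rwa [heq] at hc2
      | false =>
        right
        have hb0 : b ≠ 0 := by
          rintro rfl
          exact hg1 (P_fA_one p q)
        have h0 : ZMod.castHom (⟨q, rfl⟩ : (2:ℕ) ∣ 2*q) (ZMod 2) b = 0 := by
          simpa [chi] using hcon.symm
        have heven : 2 ∣ b.val := (cast_eq_zero_iff_even q hq.pos.ne' b).mp h0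
        exact nuSq_mem_of_mem hq hb0 heven hgN
    · left
      have hc4 : ((fA false (-(a+a))).prodCongr (fA false (cond f 2 0))) *
          (sigmaNu p (2*q) * ((fA false (-(a+a))).prodCongr (fA false (cond f 2 0))) *
            (sigmaNu p (2*q))⁻¹)⁻¹ ∈ N :=
        mul_mem hc2 (inv_mem (hN.2 _ (sigmaNu_mem_H p q) _ hc2))
      rw [conj_cancel_sigmaNu p q] at hc4
      refine mu_mem_of_mem hp ?_ hc4
      intro h
      apply ha
      have h4 : (2 : ZMod p) * ((2 : ZMod p) * a) = 0 := by linear_combination -h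
      rcases mul_eq_zero.mp h4 with h' | h'
      · exact absurd h' two_ne
      rcases mul_eq_zero.mp h' with h'' | h''
      · exact absurd h'' two_ne
      · exact h''

end Stmt15Main3
-- PHASE4 END

/-- the minimal normal subgroups of `H(p,2q)` are exactly `⟨μ⟩` and `⟨ν²⟩`. -/
theorem stmt15 (p q : ℕ) (hp : p.Prime) (hpo : Odd p) (hq : q.Prime) (hqo : Odd q)
    (M : Subgroup (Equiv.Perm (ZMod p × ZMod (2 * q)))) :
    IsMinimalNormalIn M (Hgroup p (2 * q)) ↔
      (M = Subgroup.closure {mu p (2 * q)} ∨ M = Subgroup.closure {nuSq p (2 * q)}) := by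
  haveI : Fact p.Prime := ⟨hp⟩
  haveI : NeZero p := ⟨hp.pos.ne'⟩
  haveI : NeZero (2 * q) := ⟨by have := hq.two_le; omega⟩
  constructor
  · rintro ⟨hnorm, hbot, hmin⟩
    rcases key_lemma p q hp hpo hq M hnorm hbot with hmu | hnu
    · left
      have hle : Subgroup.closure {mu p (2 * q)} ≤ M := by
        rw [Subgroup.closure_le, Set.singleton_subset_iff]
        exact hmu
      rcases hmin _ (normalIn_mu p q) hle with h | h
      · exact absurd h (closure_mu_ne_bot p q hp)
      · exact h.symm
    · right
      have hle : Subgroup.closure {nuSq p (2 * q)} ≤ M := by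
        rw [Subgroup.closure_le, Set.singleton_subset_iff]
        exact hnu
      rcases hmin _ (normalIn_nuSq p q) hle with h | h
      · exact absurd h (closure_nuSq_ne_bot p q hq)
      · exact h.symm
  · rintro (rfl | rfl)
    · refine ⟨normalIn_mu p q, closure_mu_ne_bot p q hp, ?_⟩
      intro N hNn hle
      exact eq_bot_or_eq_of_le_card _ _ hle (by rw [card_closure_mu p q hp]; exact hp)
    · refine ⟨normalIn_nuSq p q, closure_nuSq_ne_bot p q hq, ?_⟩
      intro N hNn hle
      exact eq_bot_or_eq_of_le_card _ _ hle (by rw [card_closure_nuSq p q hq]; exact hq)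

end OG4
end

section
/- Let p be an odd prime and consider the permutations of ℤ_{2p} × ℤ_4 given by μ(i,j) = (i+1,j), σν(i,j) = (-i,j+1), and τ(i,j) = (-i,-j), and let H = ⟨μ, σν, τ⟩, a subgroup of the symmetric group on ℤ_{2p} × ℤ_4. Then the minimal normal subgroups of H are exactly ⟨μ²⟩, ⟨μ^p⟩, ⟨ν²⟩, and ⟨μ^p ν²⟩, where μ² is the permutation (i,j) ↦ (i+2,j), μ^p is (i,j) ↦ (i+p,j), ν² is (i,j) ↦ (i,j+2), and μ^p ν² is (i,j) ↦ (i+p,j+2). -/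
open SimpleGraph

namespace OG4

variable {V : Type*} {W : Type*}

/-! ### Auxiliary machinery for Statement 17 -/

section Stmt17Aux

/-- affine permutations of `ZMod r × ZMod s` -/
def aff (r s : ℕ) (e d : Bool) (a : ZMod r) (b : ZMod s) : Equiv.Perm (ZMod r × ZMod s) :=
  ((cond e (Equiv.neg (ZMod r)) (Equiv.refl _)).trans (Equiv.addRight a)).prodCongr
    ((cond d (Equiv.neg (ZMod s)) (Equiv.refl _)).trans (Equiv.addRight b))

lemma aff_apply (r s : ℕ) (e d : Bool) (a : ZMod r) (b : ZMod s) (x : ZMod r × ZMod s) :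
    aff r s e d a b x = (cond e (-x.1) x.1 + a, cond d (-x.2) x.2 + b) := by
  cases e <;> cases d <;> rfl

lemma aff_one (r s : ℕ) : aff r s false false 0 0 = 1 := by
  apply Equiv.ext; rintro ⟨i, j⟩; simp [aff_apply]

lemma aff_mul (r s : ℕ) (e d e' d' : Bool) (a a' : ZMod r) (b b' : ZMod s) :
    aff r s e d a b * aff r s e' d' a' b' =
      aff r s (xor e e') (xor d d') (cond e (-a') a' + a) (cond d (-b') b' + b) := by
  apply Equiv.ext
  rintro ⟨i, j⟩
  simp only [Equiv.Perm.mul_apply, aff_apply]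
  cases e <;> cases d <;> cases e' <;> cases d' <;>
    exact Prod.ext
      (by simp only [cond_true, cond_false, Bool.xor_true, Bool.xor_false, Bool.true_xor,
            Bool.false_xor, Bool.not_true, Bool.not_false]; ring)
      (by simp only [cond_true, cond_false, Bool.xor_true, Bool.xor_false, Bool.true_xor,
            Bool.false_xor, Bool.not_true, Bool.not_false]; ring)

lemma aff_inv (r s : ℕ) (e d : Bool) (a : ZMod r) (b : ZMod s) :
    (aff r s e d a b)⁻¹ = aff r s e d (cond e a (-a)) (cond d b (-b)) := by
  apply inv_eq_of_mul_eq_one_right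
  rw [aff_mul]
  cases e <;> cases d <;> simp [aff_one]

lemma aff_t_pow (r s : ℕ) (A : ZMod r) (B : ZMod s) (n : ℕ) :
    (aff r s false false A B) ^ n = aff r s false false (n • A) (n • B) := by
  induction n with
  | zero => simp [aff_one]
  | succ n ih =>
    rw [pow_succ, ih, aff_mul]
    congr 1 <;> simp [succ_nsmul] <;> ring

lemma aff_t_zpow (r s : ℕ) (A : ZMod r) (B : ZMod s) (k : ℤ) :
    (aff r s false false A B) ^ k = aff r s false false (k • A) (k • B) := by
  rcases k with n | n
  · simpa using aff_t_pow r s A B n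
  · rw [zpow_negSucc, aff_t_pow, aff_inv]
    simp only [cond]
    congr 1 <;> simp [Int.negSucc_eq] <;> ring

lemma aff_t_inj {r s : ℕ} {A A' : ZMod r} {B B' : ZMod s}
    (h : aff r s false false A B = aff r s false false A' B') : A = A' ∧ B = B' := by
  have := DFunLike.congr_fun h (0, 0)
  simp [aff_apply, Prod.ext_iff] at this
  exact this

lemma aff_t_eq_one {r s : ℕ} {A : ZMod r} {B : ZMod s}
    (h : aff r s false false A B = 1) : A = 0 ∧ B = 0 := by
  rw [← aff_one r s] at h
  exact aff_t_inj h

/-- parity of an element of `ZMod 4` -/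
def par (b : ZMod 4) : Bool := decide (b.val % 2 = 1)

/-- The subgroup of all "admissible" affine permutations. -/
def Hform (r : ℕ) : Subgroup (Equiv.Perm (ZMod r × ZMod 4)) where
  carrier := {g | ∃ e d a b, xor e d = par b ∧ g = aff r 4 e d a b}
  one_mem' := ⟨false, false, 0, 0, by decide, (aff_one r 4).symm⟩
  mul_mem' := by
    rintro g g' ⟨e, d, a, b, hpar, rfl⟩ ⟨e', d', a', b', hpar', rfl⟩
    refine ⟨xor e e', xor d d', cond e (-a') a' + a, cond d (-b') b' + b, ?_,
      aff_mul r 4 e d e' d' a a' b b'⟩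
    have hp : ∀ (d0 : Bool) (b0 b1 : ZMod 4),
        par (cond d0 (-b1) b1 + b0) = xor (par b0) (par b1) := by decide
    rw [hp, ← hpar, ← hpar']
    cases e <;> cases d <;> cases e' <;> cases d' <;> rfl
  inv_mem' := by
    rintro g ⟨e, d, a, b, hpar, rfl⟩
    refine ⟨e, d, cond e a (-a), cond d b (-b), ?_, aff_inv r 4 e d a b⟩
    have hp : ∀ (d0 : Bool) (b0 : ZMod 4), par (cond d0 b0 (-b0)) = par b0 := by decide
    rw [hp, hpar]

lemma mu_eq_s17 (r : ℕ) : mu r 4 = aff r 4 false false 1 0 := by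
  apply Equiv.ext; rintro ⟨i, j⟩; simp [mu, aff_apply]

lemma sigmaNu_eq_s17 (r : ℕ) : sigmaNu r 4 = aff r 4 true false 0 1 := by
  apply Equiv.ext; rintro ⟨i, j⟩; simp [sigmaNu, aff_apply]

lemma tau_eq_s17 (r : ℕ) : tau r 4 = aff r 4 true true 0 0 := by
  apply Equiv.ext; rintro ⟨i, j⟩; simp [tau, aff_apply]

lemma muSq_eq' (r : ℕ) : muSq r 4 = aff r 4 false false 2 0 := by
  apply Equiv.ext; rintro ⟨i, j⟩; simp [muSq, aff_apply]

lemma nuSq_eq' (r : ℕ) : nuSq r 4 = aff r 4 false false 0 2 := by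
  apply Equiv.ext; rintro ⟨i, j⟩; simp [nuSq, aff_apply]

lemma muPow_eq' (r k : ℕ) : muPow r 4 k = aff r 4 false false (k : ZMod r) 0 := by
  apply Equiv.ext; rintro ⟨i, j⟩; simp [muPow, aff_apply]

lemma muPowNuSq_eq' (r k : ℕ) : muPowNuSq r 4 k = aff r 4 false false (k : ZMod r) 2 := by
  apply Equiv.ext; rintro ⟨i, j⟩; simp [muPowNuSq, aff_apply]

lemma Hgroup_le_Hform (r : ℕ) : Hgroup r 4 ≤ Hform r := by
  rw [Hgroup, Subgroup.closure_le]
  rintro g hg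
  simp only [Set.mem_insert_iff, Set.mem_singleton_iff] at hg
  rcases hg with rfl | rfl | rfl
  · exact ⟨false, false, 1, 0, by decide, mu_eq_s17 r⟩
  · exact ⟨true, false, 0, 1, by decide, sigmaNu_eq_s17 r⟩
  · exact ⟨true, true, 0, 0, by decide, tau_eq_s17 r⟩

lemma mu_mem (r : ℕ) : mu r 4 ∈ Hgroup r 4 :=
  Subgroup.subset_closure (by simp)

lemma sigmaNu_mem (r : ℕ) : sigmaNu r 4 ∈ Hgroup r 4 :=
  Subgroup.subset_closure (by simp)

lemma mu_pow_eq (r k : ℕ) : mu r 4 ^ k = aff r 4 false false (k : ZMod r) 0 := by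
  rw [mu_eq_s17, aff_t_pow]
  congr 1 <;> simp [nsmul_eq_mul]

lemma muSq_mem (r : ℕ) : muSq r 4 ∈ Hgroup r 4 := by
  have h : muSq r 4 = mu r 4 ^ 2 := by
    rw [mu_pow_eq, muSq_eq']; norm_num
  rw [h]; exact pow_mem (mu_mem r) 2

lemma muPow_mem (r k : ℕ) : muPow r 4 k ∈ Hgroup r 4 := by
  rw [muPow_eq', ← mu_pow_eq]; exact pow_mem (mu_mem r) k

lemma nuSq_mem (r : ℕ) : nuSq r 4 ∈ Hgroup r 4 := by
  have h : nuSq r 4 = sigmaNu r 4 * sigmaNu r 4 := by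
    rw [sigmaNu_eq_s17, aff_mul, nuSq_eq']
    simp only [cond_true, cond_false, Bool.xor_true, Bool.xor_false, Bool.true_xor,
      Bool.false_xor, Bool.not_true, Bool.not_false]
    congr 1 <;> first | rfl | ring | decide
  rw [h]; exact mul_mem (sigmaNu_mem r) (sigmaNu_mem r)

lemma muPowNuSq_mem (r k : ℕ) : muPowNuSq r 4 k ∈ Hgroup r 4 := by
  have h : muPowNuSq r 4 k = muPow r 4 k * nuSq r 4 := by
    rw [muPow_eq', nuSq_eq', muPowNuSq_eq', aff_mul]
    simp only [cond_false, Bool.xor_false]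
    congr 1 <;> first | rfl | ring | decide
  rw [h]; exact mul_mem (muPow_mem r k) (nuSq_mem r)

/-- Conjugation of generic translations by elements of `Hform`. -/
lemma conj_aff_t (r : ℕ) (e d : Bool) (a A : ZMod r) (b B : ZMod 4) :
    aff r 4 e d a b * aff r 4 false false A B * (aff r 4 e d a b)⁻¹
      = aff r 4 false false (cond e (-A) A) (cond d (-B) B) := by
  rw [aff_inv, aff_mul, aff_mul]
  cases e <;> cases d <;>
    · simp only [cond_true, cond_false, Bool.xor_true, Bool.xor_false, Bool.true_xor,
        Bool.false_xor, Bool.xor_self, Bool.not_true, Bool.not_false]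
      congr 1 <;> ring

end Stmt17Aux



section Stmt17Arith

lemma dvd_two_mul_prime {p : ℕ} (hp : p.Prime) {d : ℕ} (hd : d ∣ 2 * p) :
    d = 1 ∨ d = 2 ∨ d = p ∨ d = 2 * p := by
  rcases (Nat.dvd_prime hp).mp (Nat.gcd_dvd_right d p) with h1 | hped
  · have hcop : Nat.Coprime d p := h1
    have h2 : d ∣ 2 := hcop.dvd_of_dvd_mul_right hd
    rcases (Nat.dvd_prime Nat.prime_two).mp h2 with h | h
    · exact Or.inl h
    · exact Or.inr (Or.inl h)
  · have hpd : p ∣ d := hped ▸ Nat.gcd_dvd_left d p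
    obtain ⟨e, rfl⟩ := hpd
    have he : e ∣ 2 := by
      have h2 : p * e ∣ p * 2 := by rwa [mul_comm 2 p] at hd
      exact (Nat.mul_dvd_mul_iff_left hp.pos).mp h2
    rcases (Nat.dvd_prime Nat.prime_two).mp he with h | h
    · subst h; exact Or.inr (Or.inr (Or.inl (mul_one p)))
    · subst h; exact Or.inr (Or.inr (Or.inr (by ring)))

lemma reach {p : ℕ} (hp : p.Prime) (A : ZMod (2 * p)) (hA : A ≠ 0) :
    (∃ u : ZMod (2 * p), u * A = 2) ∨ (∃ u : ZMod (2 * p), u * A = (p : ZMod (2 * p))) := by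
  haveI : NeZero (2 * p) := ⟨by have := hp.two_le; omega⟩
  have hvpos : 0 < A.val := Nat.pos_of_ne_zero (fun h => hA ((ZMod.val_eq_zero A).mp h))
  have hvlt : A.val < 2 * p := ZMod.val_lt A
  set v := A.val with hv
  set g := Nat.gcd v (2 * p) with hg
  have hgdvd : g ∣ 2 * p := Nat.gcd_dvd_right v (2 * p)
  have hgle : g ≤ v := Nat.le_of_dvd hvpos (Nat.gcd_dvd_left v (2 * p))
  have hvA : ((v : ℕ) : ZMod (2 * p)) = A := by
    rw [hv, ZMod.natCast_val, ZMod.cast_id]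
  have hbez : ((Nat.gcdA v (2 * p) : ℤ) : ZMod (2 * p)) * A = ((g : ℕ) : ZMod (2 * p)) := by
    have h := Nat.gcd_eq_gcd_ab v (2 * p)
    have h2 := congrArg (fun z : ℤ => (z : ZMod (2 * p))) h
    push_cast at h2
    have hz : (2 : ZMod (2 * p)) * (p : ZMod (2 * p)) = 0 := by
      have h0 : ((2 * p : ℕ) : ZMod (2 * p)) = 0 := ZMod.natCast_self _
      push_cast at h0
      exact h0
    rw [← hvA]
    push_cast
    linear_combination -h2 - ((v.gcdB (2 * p) : ℤ) : ZMod (2 * p)) * hz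
  set u₀ := ((Nat.gcdA v (2 * p) : ℤ) : ZMod (2 * p)) with hu₀
  rcases dvd_two_mul_prime hp hgdvd with h1 | h2 | hP | hN
  · left
    refine ⟨2 * u₀, ?_⟩
    rw [mul_assoc, hbez, h1]
    norm_num
  · left
    refine ⟨u₀, ?_⟩
    rw [hbez, h2]
    norm_num
  · right
    exact ⟨u₀, hbez.trans (by rw [hP])⟩
  · omega

lemma half {p : ℕ} (hp : p.Prime) (A : ZMod (2 * p)) (h : A + A = 0) :
    A = 0 ∨ A = (p : ZMod (2 * p)) := by
  haveI : NeZero (2 * p) := ⟨by have := hp.two_le; omega⟩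
  have hvA : ((A.val : ℕ) : ZMod (2 * p)) = A := by rw [ZMod.natCast_val, ZMod.cast_id]
  have h1 : ((A.val + A.val : ℕ) : ZMod (2 * p)) = 0 := by push_cast [hvA]; exact h
  have h2 : (2 * p) ∣ A.val + A.val := (ZMod.natCast_eq_zero_iff _ _).mp h1
  obtain ⟨c, hc⟩ := h2
  have hvlt : A.val < 2 * p := ZMod.val_lt A
  have h2' : 2 * A.val = 2 * (p * c) := by rw [two_mul, hc]; ring
  have hval : A.val = p * c := Nat.eq_of_mul_eq_mul_left two_pos h2'
  have hc2 : c < 2 := by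
    by_contra h'
    push_neg at h'
    have h3 : p * 2 ≤ p * c := Nat.mul_le_mul_left p h'
    have h4 : p * 2 ≤ A.val := by rw [hval]; exact h3
    omega
  interval_cases c
  · left
    exact (ZMod.val_eq_zero A).mp (by omega)
  · right
    rw [← hvA, show A.val = p from by omega]

lemma val_add_self_even {p : ℕ} (hp : p.Prime) (A : ZMod (2 * p)) : (A + A).val % 2 = 0 := by
  haveI : NeZero (2 * p) := ⟨by have := hp.two_le; omega⟩
  rw [ZMod.val_add, Nat.mod_mod_of_dvd _ (Dvd.intro p rfl)]
  omega

lemma p_cast_ne_zero {p : ℕ} (hp : p.Prime) : (p : ZMod (2 * p)) ≠ 0 := by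
  haveI : NeZero (2 * p) := ⟨by have := hp.two_le; omega⟩
  intro h
  have := (ZMod.val_eq_zero _).mpr h
  rw [ZMod.val_cast_of_lt (by have := hp.pos; omega)] at this
  exact hp.pos.ne' this

lemma two_cast_ne_zero {p : ℕ} (hp : p.Prime) : (2 : ZMod (2 * p)) ≠ 0 := by
  haveI : NeZero (2 * p) := ⟨by have := hp.two_le; omega⟩
  intro h
  have h2 : ((2 : ℕ) : ZMod (2 * p)) = 0 := by exact_mod_cast h
  have := (ZMod.natCast_eq_zero_iff 2 (2 * p)).mp h2
  have := Nat.le_of_dvd (by norm_num) this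
  have := hp.two_le
  omega

lemma neg_p_cast {p : ℕ} (hp : p.Prime) : -(p : ZMod (2 * p)) = (p : ZMod (2 * p)) := by
  have h : (p : ZMod (2 * p)) + (p : ZMod (2 * p)) = 0 := by
    rw [← Nat.cast_add, show p + p = 2 * p by ring, ZMod.natCast_self]
  exact neg_eq_of_add_eq_zero_left h

lemma p_cast_val_odd {p : ℕ} (hp : p.Prime) (hpo : Odd p) :
    (p : ZMod (2 * p)).val % 2 = 1 := by
  haveI : NeZero (2 * p) := ⟨by have := hp.two_le; omega⟩
  rw [ZMod.val_cast_of_lt (by have := hp.pos; omega)]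
  exact Nat.odd_iff.mp hpo

end Stmt17Arith


section Stmt17Main

lemma comm_mu (r : ℕ) (d : Bool) (a : ZMod r) (b : ZMod 4) :
    aff r 4 true d a b * (mu r 4 * (aff r 4 true d a b)⁻¹ * (mu r 4)⁻¹) =
      aff r 4 false false (-2) 0 := by
  rw [mu_eq_s17, aff_inv, aff_inv, aff_mul, aff_mul, aff_mul]
  cases d <;>
    · simp only [cond_true, cond_false, Bool.xor_true, Bool.xor_false, Bool.true_xor,
        Bool.false_xor, Bool.xor_self, Bool.not_true, Bool.not_false]
      congr 1 <;> first | rfl | ring | (ring_nf; decide) | decide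

lemma comm_sigmaNu (r : ℕ) (a : ZMod r) (b : ZMod 4) :
    aff r 4 false true a b * (sigmaNu r 4 * (aff r 4 false true a b)⁻¹ * (sigmaNu r 4)⁻¹) =
      aff r 4 false false (a + a) 2 := by
  rw [sigmaNu_eq_s17, aff_inv, aff_inv, aff_mul, aff_mul, aff_mul]
  simp only [cond_true, cond_false, Bool.xor_true, Bool.xor_false, Bool.true_xor,
    Bool.false_xor, Bool.xor_self, Bool.not_true, Bool.not_false]
  congr 1
  · ring
  · have h4 : (4 : ZMod 4) = 0 := by decide
    linear_combination -h4

lemma transl0 {p : ℕ} (hp : p.Prime) (N : Subgroup (Equiv.Perm (ZMod (2 * p) × ZMod 4)))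
    (A : ZMod (2 * p)) (hA : A ≠ 0) (ht : aff (2 * p) 4 false false A 0 ∈ N) :
    muSq (2 * p) 4 ∈ N ∨ muPow (2 * p) 4 p ∈ N := by
  haveI : NeZero (2 * p) := ⟨by have := hp.two_le; omega⟩
  rcases reach hp A hA with ⟨u, hu⟩ | ⟨u, hu⟩
  · left
    have h1 := pow_mem ht u.val
    rw [aff_t_pow, smul_zero] at h1
    have h2 : u.val • A = 2 := by
      rw [nsmul_eq_mul, ZMod.natCast_val, ZMod.cast_id, hu]
    rwa [h2, ← muSq_eq'] at h1
  · right
    have h1 := pow_mem ht u.val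
    rw [aff_t_pow, smul_zero] at h1
    have h2 : u.val • A = (p : ZMod (2 * p)) := by
      rw [nsmul_eq_mul, ZMod.natCast_val, ZMod.cast_id, hu]
    rwa [h2, ← muPow_eq'] at h1

lemma transl2 {p : ℕ} (hp : p.Prime) (N : Subgroup (Equiv.Perm (ZMod (2 * p) × ZMod 4)))
    (A : ZMod (2 * p)) (ht : aff (2 * p) 4 false false A 2 ∈ N) :
    muSq (2 * p) 4 ∈ N ∨ muPow (2 * p) 4 p ∈ N ∨ nuSq (2 * p) 4 ∈ N ∨
      muPowNuSq (2 * p) 4 p ∈ N := by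
  by_cases h2A : A + A = 0
  · rcases half hp A h2A with rfl | hA
    · right; right; left; rwa [← nuSq_eq'] at ht
    · right; right; right; rw [hA, ← muPowNuSq_eq'] at ht; exact ht
  · have hsq : (aff (2 * p) 4 false false A 2) ^ 2 = aff (2 * p) 4 false false (A + A) 0 := by
      rw [aff_t_pow, two_nsmul, two_nsmul, show (2 : ZMod 4) + 2 = 0 from by decide]
    have h1 := pow_mem ht 2
    rw [hsq] at h1
    rcases transl0 hp N (A + A) h2A h1 with h | h
    · exact Or.inl h
    · exact Or.inr (Or.inl h)

lemma key {p : ℕ} (hp : p.Prime) (N : Subgroup (Equiv.Perm (ZMod (2 * p) × ZMod 4)))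
    (hN : NormalIn N (Hgroup (2 * p) 4)) (hbot : N ≠ ⊥) :
    muSq (2 * p) 4 ∈ N ∨ muPow (2 * p) 4 p ∈ N ∨ nuSq (2 * p) 4 ∈ N ∨
      muPowNuSq (2 * p) 4 p ∈ N := by
  obtain ⟨⟨n, hnN⟩, hn1'⟩ := Subgroup.ne_bot_iff_exists_ne_one.mp hbot
  have hn1 : n ≠ 1 := fun h => hn1' (Subtype.ext h)
  obtain ⟨e, d, a, b, hpar, rfl⟩ := Hgroup_le_Hform (2 * p) (hN.1 hnN)
  cases e with
  | true =>
    left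
    have h1 : mu (2 * p) 4 * (aff (2 * p) 4 true d a b)⁻¹ * (mu (2 * p) 4)⁻¹ ∈ N :=
      hN.2 _ (mu_mem _) _ (inv_mem hnN)
    have h2 := mul_mem hnN h1
    rw [comm_mu] at h2
    have h4 : muSq (2 * p) 4 = (aff (2 * p) 4 false false (-2) 0)⁻¹ := by
      rw [aff_inv, muSq_eq']
      simp only [cond_false]
      congr 1 <;> ring
    rw [h4]
    exact inv_mem h2
  | false =>
    cases d with
    | true =>
      have h1 : sigmaNu (2 * p) 4 * (aff (2 * p) 4 false true a b)⁻¹ * (sigmaNu (2 * p) 4)⁻¹ ∈ N :=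
        hN.2 _ (sigmaNu_mem _) _ (inv_mem hnN)
      have h2 := mul_mem hnN h1
      rw [comm_sigmaNu] at h2
      exact transl2 hp N (a + a) h2
    | false =>
      have hb : b = 0 ∨ b = 2 := by
        have hdec : ∀ b0 : ZMod 4, par b0 = false → b0 = 0 ∨ b0 = 2 := by decide
        exact hdec b (by rw [← hpar]; rfl)
      rcases hb with rfl | rfl
      · have hA : a ≠ 0 := fun h => hn1 (by rw [h, aff_one])
        rcases transl0 hp N a hA hnN with h | h
        · exact Or.inl h
        · exact Or.inr (Or.inl h)
      · exact transl2 hp N a hnN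

lemma normalIn_closure {r : ℕ} {x : Equiv.Perm (ZMod r × ZMod 4)} (hxH : x ∈ Hgroup r 4)
    (hconj : ∀ h ∈ Hform r, h * x * h⁻¹ ∈ Subgroup.closure {x}) :
    NormalIn (Subgroup.closure {x}) (Hgroup r 4) := by
  refine ⟨(Subgroup.closure_le _).mpr (Set.singleton_subset_iff.mpr hxH), ?_⟩
  intro h hh n hn
  rw [← Subgroup.zpowers_eq_closure] at hn ⊢
  obtain ⟨k, hk⟩ := Subgroup.mem_zpowers_iff.mp hn
  rw [← hk]
  have hc : h * x ^ k * h⁻¹ = (h * x * h⁻¹) ^ k := conj_zpow.symm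
  rw [hc]
  refine Subgroup.zpow_mem _ ?_ k
  rw [Subgroup.zpowers_eq_closure]
  exact hconj h (Hgroup_le_Hform r hh)

lemma conj_central {r : ℕ} {A : ZMod r} {B : ZMod 4} (hA : -A = A) (hB : -B = B)
    (h : Equiv.Perm (ZMod r × ZMod 4)) (hh : h ∈ Hform r) :
    h * aff r 4 false false A B * h⁻¹ = aff r 4 false false A B := by
  obtain ⟨e, d, a, b, hpar, rfl⟩ := hh
  rw [conj_aff_t]
  cases e <;> cases d <;> simp [hA, hB]

lemma normal_muSq (r : ℕ) : NormalIn (Subgroup.closure {muSq r 4}) (Hgroup r 4) := by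
  apply normalIn_closure (muSq_mem r)
  intro h hh
  obtain ⟨e, d, a, b, hpar, rfl⟩ := hh
  rw [muSq_eq', conj_aff_t]
  have hinv : aff r 4 false false (-2) (0 : ZMod 4) = (muSq r 4)⁻¹ := by
    rw [muSq_eq', aff_inv]
    simp only [cond_false]
    congr 1 <;> ring
  cases e <;> cases d <;> simp only [cond_false, cond_true, neg_zero]
  · exact Subgroup.subset_closure rfl
  · exact Subgroup.subset_closure rfl
  · rw [hinv, ← muSq_eq']
    exact inv_mem (Subgroup.subset_closure rfl)
  · rw [hinv, ← muSq_eq']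
    exact inv_mem (Subgroup.subset_closure rfl)

lemma normal_muPow {p : ℕ} (hp : p.Prime) :
    NormalIn (Subgroup.closure {muPow (2 * p) 4 p}) (Hgroup (2 * p) 4) := by
  apply normalIn_closure (muPow_mem _ p)
  intro h hh
  have hc : h * muPow (2 * p) 4 p * h⁻¹ = muPow (2 * p) 4 p := by
    rw [muPow_eq', conj_central (neg_p_cast hp) neg_zero h hh]
  rw [hc]
  exact Subgroup.subset_closure rfl

lemma normal_nuSq (r : ℕ) : NormalIn (Subgroup.closure {nuSq r 4}) (Hgroup r 4) := by
  apply normalIn_closure (nuSq_mem r)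
  intro h hh
  have hc : h * nuSq r 4 * h⁻¹ = nuSq r 4 := by
    rw [nuSq_eq', conj_central neg_zero (by decide) h hh]
  rw [hc]
  exact Subgroup.subset_closure rfl

lemma normal_muPowNuSq {p : ℕ} (hp : p.Prime) :
    NormalIn (Subgroup.closure {muPowNuSq (2 * p) 4 p}) (Hgroup (2 * p) 4) := by
  apply normalIn_closure (muPowNuSq_mem _ p)
  intro h hh
  have hc : h * muPowNuSq (2 * p) 4 p * h⁻¹ = muPowNuSq (2 * p) 4 p := by
    rw [muPowNuSq_eq', conj_central (neg_p_cast hp) (by decide) h hh]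
  rw [hc]
  exact Subgroup.subset_closure rfl

lemma closure_ne_bot {G : Type*} [Group G] {x : G} (hx : x ≠ 1) :
    Subgroup.closure ({x} : Set G) ≠ ⊥ := by
  intro h
  apply hx
  have hm := Subgroup.subset_closure (Set.mem_singleton x)
  rw [h] at hm
  exact Subgroup.mem_bot.mp hm

lemma muSq_ne_one {p : ℕ} (hp : p.Prime) : muSq (2 * p) 4 ≠ 1 := by
  rw [muSq_eq']
  intro h
  exact two_cast_ne_zero hp (aff_t_eq_one h).1

lemma muPow_ne_one {p : ℕ} (hp : p.Prime) : muPow (2 * p) 4 p ≠ 1 := by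
  rw [muPow_eq']
  intro h
  exact p_cast_ne_zero hp (aff_t_eq_one h).1

lemma nuSq_ne_one_s17 (r : ℕ) : nuSq r 4 ≠ 1 := by
  rw [nuSq_eq']
  intro h
  have := (aff_t_eq_one h).2
  exact absurd this (by decide)

lemma muPowNuSq_ne_one {p : ℕ} (hp : p.Prime) : muPowNuSq (2 * p) 4 p ≠ 1 := by
  rw [muPowNuSq_eq']
  intro h
  have := (aff_t_eq_one h).2
  exact absurd this (by decide)

lemma p_add_p_cast {p : ℕ} : (p : ZMod (2 * p)) + (p : ZMod (2 * p)) = 0 := by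
  rw [← Nat.cast_add, show p + p = 2 * p by ring, ZMod.natCast_self]

lemma muPow_sq {p : ℕ} (hp : p.Prime) : muPow (2 * p) 4 p * muPow (2 * p) 4 p = 1 := by
  rw [muPow_eq', aff_mul]
  simp only [cond_false, Bool.xor_self, Bool.false_xor]
  rw [p_add_p_cast, zero_add, aff_one]

lemma nuSq_sq (r : ℕ) : nuSq r 4 * nuSq r 4 = 1 := by
  rw [nuSq_eq', aff_mul]
  simp only [cond_false, Bool.xor_self, Bool.false_xor]
  rw [show ((2 : ZMod 4) + 2 = 0) from by decide, add_zero, aff_one]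

lemma muPowNuSq_sq {p : ℕ} (hp : p.Prime) :
    muPowNuSq (2 * p) 4 p * muPowNuSq (2 * p) 4 p = 1 := by
  rw [muPowNuSq_eq', aff_mul]
  simp only [cond_false, Bool.xor_self, Bool.false_xor]
  rw [p_add_p_cast, show ((2 : ZMod 4) + 2 = 0) from by decide, aff_one]

lemma min_sq {G : Type*} [Group G] {x : G} (hx : x * x = 1) {N : Subgroup G}
    (hle : N ≤ Subgroup.closure {x}) (hbot : N ≠ ⊥) : N = Subgroup.closure {x} := by
  obtain ⟨⟨n, hnN⟩, hn1'⟩ := Subgroup.ne_bot_iff_exists_ne_one.mp hbot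
  have hn1 : n ≠ 1 := fun h => hn1' (Subtype.ext h)
  have hn := hle hnN
  rw [← Subgroup.zpowers_eq_closure] at hn
  obtain ⟨k, hk⟩ := Subgroup.mem_zpowers_iff.mp hn
  have hx2 : x ^ (2 : ℤ) = 1 := by
    rw [show (2 : ℤ) = 1 + 1 from by norm_num, zpow_add, zpow_one, hx]
  have hxk : x ^ k = 1 ∨ x ^ k = x := by
    rcases Int.even_or_odd k with ⟨m, hm⟩ | ⟨m, hm⟩
    · left
      rw [hm, ← two_mul, zpow_mul, hx2, one_zpow]
    · right
      rw [hm, zpow_add, zpow_one, zpow_mul, hx2, one_zpow, one_mul]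
  rcases hxk with h | h
  · exact absurd (hk.symm.trans h) hn1
  · have hxN : x ∈ N := (h.symm.trans hk) ▸ hnN
    exact le_antisymm hle ((Subgroup.closure_le N).mpr (Set.singleton_subset_iff.mpr hxN))

lemma min_muSq {p : ℕ} (hp : p.Prime) (hpo : Odd p)
    {N : Subgroup (Equiv.Perm (ZMod (2 * p) × ZMod 4))}
    (hle : N ≤ Subgroup.closure {muSq (2 * p) 4}) (hbot : N ≠ ⊥) :
    N = Subgroup.closure {muSq (2 * p) 4} := by
  haveI : NeZero (2 * p) := ⟨by have := hp.two_le; omega⟩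
  obtain ⟨⟨n, hnN⟩, hn1'⟩ := Subgroup.ne_bot_iff_exists_ne_one.mp hbot
  have hn1 : n ≠ 1 := fun h => hn1' (Subtype.ext h)
  have hn := hle hnN
  rw [← Subgroup.zpowers_eq_closure] at hn
  obtain ⟨k, hk⟩ := Subgroup.mem_zpowers_iff.mp hn
  rw [muSq_eq', aff_t_zpow, smul_zero] at hk
  have hA0 : k • (2 : ZMod (2 * p)) ≠ 0 := by
    intro h0
    apply hn1
    rw [← hk, h0, aff_one]
  have htN : aff (2 * p) 4 false false (k • (2 : ZMod (2 * p))) 0 ∈ N := hk ▸ hnN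
  rcases transl0 hp N _ hA0 htN with h | h
  · exact le_antisymm hle ((Subgroup.closure_le N).mpr (Set.singleton_subset_iff.mpr h))
  · exfalso
    have hm := hle h
    rw [← Subgroup.zpowers_eq_closure] at hm
    obtain ⟨m, hmk⟩ := Subgroup.mem_zpowers_iff.mp hm
    rw [muSq_eq', aff_t_zpow, smul_zero, muPow_eq'] at hmk
    obtain ⟨h1, -⟩ := aff_t_inj hmk
    have heven : (m • (2 : ZMod (2 * p))).val % 2 = 0 := by
      have he : m • (2 : ZMod (2 * p)) = (m : ZMod (2 * p)) + (m : ZMod (2 * p)) := by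
        rw [zsmul_eq_mul]; ring
      rw [he]
      exact val_add_self_even hp _
    rw [h1, p_cast_val_odd hp hpo] at heven
    exact one_ne_zero heven

end Stmt17Main

/-- the minimal normal subgroups of `H(2p,4)` are exactly `⟨μ²⟩`, `⟨μ^p⟩`,
`⟨ν²⟩` and `⟨μ^p ν²⟩`. -/
theorem stmt17 (p : ℕ) (hp : p.Prime) (hpo : Odd p)
    (M : Subgroup (Equiv.Perm (ZMod (2 * p) × ZMod 4))) :
    IsMinimalNormalIn M (Hgroup (2 * p) 4) ↔
      (M = Subgroup.closure {muSq (2 * p) 4} ∨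
        M = Subgroup.closure {muPow (2 * p) 4 p} ∨
        M = Subgroup.closure {nuSq (2 * p) 4} ∨
        M = Subgroup.closure {muPowNuSq (2 * p) 4 p}) := by
  constructor
  · rintro ⟨hMnorm, hMbot, hMmin⟩
    rcases key hp M hMnorm hMbot with h | h | h | h
    · left
      have hle : Subgroup.closure {muSq (2 * p) 4} ≤ M :=
        (Subgroup.closure_le M).mpr (Set.singleton_subset_iff.mpr h)
      rcases hMmin _ (normal_muSq (2 * p)) hle with hb | he
      · exact absurd hb (closure_ne_bot (muSq_ne_one hp))
      · exact he.symm
    · right; left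
      have hle : Subgroup.closure {muPow (2 * p) 4 p} ≤ M :=
        (Subgroup.closure_le M).mpr (Set.singleton_subset_iff.mpr h)
      rcases hMmin _ (normal_muPow hp) hle with hb | he
      · exact absurd hb (closure_ne_bot (muPow_ne_one hp))
      · exact he.symm
    · right; right; left
      have hle : Subgroup.closure {nuSq (2 * p) 4} ≤ M :=
        (Subgroup.closure_le M).mpr (Set.singleton_subset_iff.mpr h)
      rcases hMmin _ (normal_nuSq (2 * p)) hle with hb | he
      · exact absurd hb (closure_ne_bot (nuSq_ne_one_s17 (2 * p)))
      · exact he.symm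
    · right; right; right
      have hle : Subgroup.closure {muPowNuSq (2 * p) 4 p} ≤ M :=
        (Subgroup.closure_le M).mpr (Set.singleton_subset_iff.mpr h)
      rcases hMmin _ (normal_muPowNuSq hp) hle with hb | he
      · exact absurd hb (closure_ne_bot (muPowNuSq_ne_one hp))
      · exact he.symm
  · rintro (rfl | rfl | rfl | rfl)
    · refine ⟨normal_muSq _, closure_ne_bot (muSq_ne_one hp), fun N _ hle => ?_⟩
      by_cases hb : N = ⊥
      · exact Or.inl hb
      · exact Or.inr (min_muSq hp hpo hle hb)
    · refine ⟨normal_muPow hp, closure_ne_bot (muPow_ne_one hp), fun N _ hle => ?_⟩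
      by_cases hb : N = ⊥
      · exact Or.inl hb
      · exact Or.inr (min_sq (muPow_sq hp) hle hb)
    · refine ⟨normal_nuSq _, closure_ne_bot (nuSq_ne_one_s17 (2 * p)), fun N _ hle => ?_⟩
      by_cases hb : N = ⊥
      · exact Or.inl hb
      · exact Or.inr (min_sq (nuSq_sq (2 * p)) hle hb)
    · refine ⟨normal_muPowNuSq hp, closure_ne_bot (muPowNuSq_ne_one hp), fun N _ hle => ?_⟩
      by_cases hb : N = ⊥
      · exact Or.inl hb
      · exact Or.inr (min_sq (muPowNuSq_sq hp) hle hb)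

end OG4
end
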